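/- Let N ≥ 2 be even, and let M'_N = {(b,k) : k ∈ ℤ_{≥0}, b ∈ B_sp^− if k is even, b ∈ B_sp^+ if k is odd} be the analogous model of the crystal base B(−ω_{N−1}) of the U_q(D(N,1))-module V(−ω_{N−1}), with operators given by the same formulas as on M_N. Then in M_N × M'_N with the tensor-product operators, the elements x ⊗ y satisfying f̃_i(x ⊗ y) = 0 for all 0 ≤ i ≤ N are exactly: ((+,…,+), 0) ⊗ ((+^{2j+1}, −^{N−2j−1}), 0) for each 0 ≤ j ≤ (N−2)/2, where (+^{2j+1}, −^{N−2j−1}) has first 2j+1 entries + and the rest −; and ((+,…,+), 0) ⊗ ((−,…,−), 2k+1) for each k ∈ ℤ_{≥0}. -/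

import Mathlib

namespace CrystalPaper

/-- A sign sequence of length `N`: `true` codes `+`, `false` codes `−`. -/
abbrev Seq (N : ℕ) := Fin N → Bool

/-- The constant sequence `(+,…,+)`. -/
def top (N : ℕ) : Seq N := fun _ => true

/-- The constant sequence `(−,…,−)`. -/
def bot (N : ℕ) : Seq N := fun _ => false

/-- The sequence `(+^k, −^{N−k})` (first `k` entries `+`, the rest `−`). -/
def lowSeq (N k : ℕ) : Seq N := fun i => decide ((i : ℕ) < k)

/-- The number of `−` entries of a sign sequence. -/
def minusCount (N : ℕ) (b : Seq N) : ℕ :=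
  (Finset.univ.filter (fun i => b i = false)).card

/-- `B_sp^+`: sign sequences with an even number of `−` entries. -/
def BspPlus (N : ℕ) (b : Seq N) : Prop := Even (minusCount N b)

/-- `B_sp^−`: sign sequences with an odd number of `−` entries. -/
def BspMinus (N : ℕ) (b : Seq N) : Prop := Odd (minusCount N b)

/-- The type-`D_N` Kashiwara raising operator `ẽ_l`, labels `1 ≤ l ≤ N`
(`none` codes `0`).  For `1 ≤ l ≤ N−1` it replaces `(b_l, b_{l+1}) = (+,−)` by `(−,+)`;
`ẽ_N` replaces `(b_{N−1}, b_N) = (+,+)` by `(−,−)`. -/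
def eD (N l : ℕ) (b : Seq N) : Option (Seq N) :=
  if h : 1 ≤ l ∧ l + 1 ≤ N then
    let i : Fin N := ⟨l - 1, by omega⟩
    let j : Fin N := ⟨l, by omega⟩
    if b i = true ∧ b j = false then
      some (Function.update (Function.update b i false) j true)
    else none
  else if h2 : l = N ∧ 2 ≤ N then
    let i : Fin N := ⟨N - 2, by omega⟩
    let j : Fin N := ⟨N - 1, by omega⟩
    if b i = true ∧ b j = true then
      some (Function.update (Function.update b i false) j false)
    else none
  else none

/-- The type-`D_N` Kashiwara lowering operator `f̃_l`, labels `1 ≤ l ≤ N`.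
For `1 ≤ l ≤ N−1` it replaces `(b_l, b_{l+1}) = (−,+)` by `(+,−)`;
`f̃_N` replaces `(b_{N−1}, b_N) = (−,−)` by `(+,+)`. -/
def fD (N l : ℕ) (b : Seq N) : Option (Seq N) :=
  if h : 1 ≤ l ∧ l + 1 ≤ N then
    let i : Fin N := ⟨l - 1, by omega⟩
    let j : Fin N := ⟨l, by omega⟩
    if b i = false ∧ b j = true then
      some (Function.update (Function.update b i true) j false)
    else none
  else if h2 : l = N ∧ 2 ≤ N then
    let i : Fin N := ⟨N - 2, by omega⟩
    let j : Fin N := ⟨N - 1, by omega⟩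
    if b i = false ∧ b j = false then
      some (Function.update (Function.update b i true) j true)
    else none
  else none

/-- `n`-fold iteration of a partial operator. -/
def iterOp {σ : Type*} (f : σ → Option σ) : ℕ → σ → Option σ
  | 0, x => some x
  | n + 1, x => (f x).bind (iterOp f n)

/-- `max {n ≥ 0 : f^n x ≠ 0}`, as a supremum in `ℕ`.  Used for the string
lengths `ε_l(x) = max{n : ẽ_l^n x ≠ 0}` and `φ_l(x) = max{n : f̃_l^n x ≠ 0}`. -/
noncomputable def opMax {σ : Type*} (f : σ → Option σ) (x : σ) : ℕ :=
  sSup {n | iterOp f n x ≠ none}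

/-- Elements of the combinatorial model of `B(−ω_N)` for `U_q(D(N,1))`:
pairs of a sign sequence and a non-negative integer. -/
abbrev MSeq (N : ℕ) := Seq N × ℕ

/-- Membership in the model `M_N` of `B(−ω_N)`: the sign sequence lies in `B_sp^+`
if the integer is even and in `B_sp^−` if it is odd. -/
def memMD (N : ℕ) (x : MSeq N) : Prop :=
  if x.2 % 2 = 0 then BspPlus N x.1 else BspMinus N x.1

/-- Membership in the model `M'_N` of `B(−ω_{N−1})`: parities swapped. -/
def memMD' (N : ℕ) (x : MSeq N) : Prop :=
  if x.2 % 2 = 0 then BspMinus N x.1 else BspPlus N x.1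

/-- The operators `ẽ_l`, `0 ≤ l ≤ N`, on the model: for `l ≥ 1` they act on the sign
sequence; `ẽ_0(b,k) = ((+,b_2,…,b_N), k+1)` if `b_1 = −`, and `0` otherwise. -/
def eSD (N l : ℕ) (x : MSeq N) : Option (MSeq N) :=
  if l = 0 then
    if h : 1 ≤ N then
      if x.1 ⟨0, h⟩ = false then some (Function.update x.1 ⟨0, h⟩ true, x.2 + 1) else none
    else none
  else (eD N l x.1).map fun b => (b, x.2)

/-- The operators `f̃_l`, `0 ≤ l ≤ N`, on the model: for `l ≥ 1` they act on the sign
sequence; `f̃_0(b,k) = ((−,b_2,…,b_N), k−1)` if `b_1 = +` and `k ≥ 1`, and `0` otherwise. -/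
def fSD (N l : ℕ) (x : MSeq N) : Option (MSeq N) :=
  if l = 0 then
    if h : 1 ≤ N then
      if x.1 ⟨0, h⟩ = true ∧ 1 ≤ x.2 then some (Function.update x.1 ⟨0, h⟩ false, x.2 - 1)
      else none
    else none
  else (fD N l x.1).map fun b => (b, x.2)

/-- `⟨h_0, (b,k)⟩ = k` if `b_1 = +`, and `k + 1` if `b_1 = −`. -/
def hZero (N : ℕ) (x : MSeq N) : ℕ :=
  if h : 1 ≤ N then (if x.1 ⟨0, h⟩ = true then x.2 else x.2 + 1) else x.2

/-- The tensor-product lowering operators on pairs of model elements: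
the super rule for `l = 0` (`f̃_0(x ⊗ y) = x ⊗ f̃_0 y` if `⟨h_0,x⟩ = 0`, and
`f̃_0 x ⊗ y` if `⟨h_0,x⟩ > 0`), and the tensor rule for `1 ≤ l ≤ N`. -/
noncomputable def tfSD (N l : ℕ) (p : MSeq N × MSeq N) : Option (MSeq N × MSeq N) :=
  if l = 0 then
    if hZero N p.1 = 0 then (fSD N 0 p.2).map fun y => (p.1, y)
    else (fSD N 0 p.1).map fun x => (x, p.2)
  else
    if opMax (eSD N l) p.1 < opMax (fSD N l) p.2 then (fSD N l p.2).map fun y => (p.1, y)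
    else (fSD N l p.1).map fun x => (x, p.2)

section Aux
variable {N : ℕ}

lemma opMax_eq_zero {σ : Type*} (f : σ → Option σ) (x : σ) (h : f x = none) : opMax f x = 0 := by
  have hs : {n | iterOp f n x ≠ none} = {0} := by
    ext n
    cases n with
    | zero => simp [iterOp]
    | succ n => simp [iterOp, h]
  rw [opMax, hs, csSup_singleton]

lemma opMax_eq_one {σ : Type*} (f : σ → Option σ) (x x' : σ) (h : f x = some x')
    (h' : f x' = none) : opMax f x = 1 := by
  have hs : {n | iterOp f n x ≠ none} = {0, 1} := by
    ext n
    match n with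
    | 0 => simp [iterOp]
    | 1 => simp [iterOp, h]
    | n+2 => simp [iterOp, h, h']
  rw [opMax, hs, csSup_pair]
  rfl

lemma fD_eq_lt (l : ℕ) (h1 : 1 ≤ l) (h2 : l + 1 ≤ N) (b : Seq N) :
    fD N l b = if b ⟨l-1, by omega⟩ = false ∧ b ⟨l, by omega⟩ = true then
      some (Function.update (Function.update b ⟨l-1, by omega⟩ true) ⟨l, by omega⟩ false)
    else none := by
  rw [fD, dif_pos ⟨h1, h2⟩]

lemma fD_eq_N (hN : 2 ≤ N) (b : Seq N) :
    fD N N b = if b ⟨N-2, by omega⟩ = false ∧ b ⟨N-1, by omega⟩ = false then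
      some (Function.update (Function.update b ⟨N-2, by omega⟩ true) ⟨N-1, by omega⟩ true)
    else none := by
  rw [fD, dif_neg (by omega), dif_pos ⟨rfl, hN⟩]

lemma eD_eq_lt (l : ℕ) (h1 : 1 ≤ l) (h2 : l + 1 ≤ N) (b : Seq N) :
    eD N l b = if b ⟨l-1, by omega⟩ = true ∧ b ⟨l, by omega⟩ = false then
      some (Function.update (Function.update b ⟨l-1, by omega⟩ false) ⟨l, by omega⟩ true)
    else none := by
  rw [eD, dif_pos ⟨h1, h2⟩]

lemma eD_eq_N (hN : 2 ≤ N) (b : Seq N) :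
    eD N N b = if b ⟨N-2, by omega⟩ = true ∧ b ⟨N-1, by omega⟩ = true then
      some (Function.update (Function.update b ⟨N-2, by omega⟩ false) ⟨N-1, by omega⟩ false)
    else none := by
  rw [eD, dif_neg (by omega), dif_pos ⟨rfl, hN⟩]

lemma fD_nilp (hN : 2 ≤ N) (l : ℕ) (h1 : 1 ≤ l) (h2 : l ≤ N) (b b' : Seq N)
    (h : fD N l b = some b') : fD N l b' = none := by
  rcases Nat.lt_or_ge l N with hl | hl
  · rw [fD_eq_lt l h1 (by omega)] at h ⊢
    split at h
    · rw [if_neg]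
      cases h
      simp [Function.update_apply, Fin.ext_iff, show l - 1 ≠ l by omega]
    · exact absurd h (by simp)
  · obtain rfl : l = N := by omega
    rw [fD_eq_N hN] at h ⊢
    split at h
    · rw [if_neg]
      cases h
      simp [Function.update_apply, Fin.ext_iff, show l - 2 ≠ l - 1 by omega]
    · exact absurd h (by simp)

lemma eD_nilp (hN : 2 ≤ N) (l : ℕ) (h1 : 1 ≤ l) (h2 : l ≤ N) (b b' : Seq N)
    (h : eD N l b = some b') : eD N l b' = none := by
  rcases Nat.lt_or_ge l N with hl | hl
  · rw [eD_eq_lt l h1 (by omega)] at h ⊢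
    split at h
    · rw [if_neg]
      cases h
      simp [Function.update_apply, Fin.ext_iff, show l - 1 ≠ l by omega]
    · exact absurd h (by simp)
  · obtain rfl : l = N := by omega
    rw [eD_eq_N hN] at h ⊢
    split at h
    · rw [if_neg]
      cases h
      simp [Function.update_apply, Fin.ext_iff, show l - 2 ≠ l - 1 by omega]
    · exact absurd h (by simp)

lemma fSD_pos (l : ℕ) (h1 : 1 ≤ l) (x : MSeq N) :
    fSD N l x = (fD N l x.1).map fun b => (b, x.2) := by
  rw [fSD, if_neg (by omega)]

lemma eSD_pos (l : ℕ) (h1 : 1 ≤ l) (x : MSeq N) :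
    eSD N l x = (eD N l x.1).map fun b => (b, x.2) := by
  rw [eSD, if_neg (by omega)]

lemma opMax_fSD_eq_zero (hN : 2 ≤ N) (l : ℕ) (h1 : 1 ≤ l) (h2 : l ≤ N) (y : MSeq N)
    (h : fD N l y.1 = none) : opMax (fSD N l) y = 0 :=
  opMax_eq_zero _ _ (by rw [fSD_pos l h1, h]; rfl)

lemma opMax_fSD_eq_one (hN : 2 ≤ N) (l : ℕ) (h1 : 1 ≤ l) (h2 : l ≤ N) (y : MSeq N)
    (c : Seq N) (h : fD N l y.1 = some c) : opMax (fSD N l) y = 1 := by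
  refine opMax_eq_one _ _ (c, y.2) ?_ ?_
  · rw [fSD_pos l h1, h]; rfl
  · rw [fSD_pos l h1]
    rw [show ((c, y.2) : MSeq N).1 = c from rfl, fD_nilp hN l h1 h2 y.1 c h]
    rfl

lemma opMax_eSD_eq_zero (hN : 2 ≤ N) (l : ℕ) (h1 : 1 ≤ l) (h2 : l ≤ N) (x : MSeq N)
    (h : eD N l x.1 = none) : opMax (eSD N l) x = 0 :=
  opMax_eq_zero _ _ (by rw [eSD_pos l h1, h]; rfl)

lemma opMax_eSD_eq_one (hN : 2 ≤ N) (l : ℕ) (h1 : 1 ≤ l) (h2 : l ≤ N) (x : MSeq N)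
    (c : Seq N) (h : eD N l x.1 = some c) : opMax (eSD N l) x = 1 := by
  refine opMax_eq_one _ _ (c, x.2) ?_ ?_
  · rw [eSD_pos l h1, h]; rfl
  · rw [eSD_pos l h1]
    rw [show ((c, x.2) : MSeq N).1 = c from rfl, eD_nilp hN l h1 h2 x.1 c h]
    rfl

lemma tfSD_pos_none_iff (hN : 2 ≤ N) (l : ℕ) (h1 : 1 ≤ l) (h2 : l ≤ N) (x y : MSeq N) :
    tfSD N l (x, y) = none ↔
      (fD N l x.1 = none ∧ (fD N l y.1 = none ∨ eD N l x.1 ≠ none)) := by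
  rw [tfSD, if_neg (by omega : l ≠ 0)]
  rcases h : fD N l y.1 with _ | c
  · rw [if_neg (by rw [opMax_fSD_eq_zero hN l h1 h2 y h]; omega)]
    rw [fSD_pos l h1]
    rcases hx : fD N l x.1 with _ | b <;> simp [hx, h]
  · have hy1 : opMax (fSD N l) y = 1 := opMax_fSD_eq_one hN l h1 h2 y c h
    rcases he : eD N l x.1 with _ | b''
    · rw [if_pos (by rw [hy1, opMax_eSD_eq_zero hN l h1 h2 x he]; omega)]
      rw [fSD_pos l h1, h]
      simp [h, he]
    · rw [if_neg (by rw [hy1, opMax_eSD_eq_one hN l h1 h2 x b'' he]; omega)]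
      rw [fSD_pos l h1]
      rcases hx : fD N l x.1 with _ | b <;> simp [hx, h, he]

lemma fD_lt_none_iff (l : ℕ) (h1 : 1 ≤ l) (h2 : l + 1 ≤ N) (b : Seq N) :
    fD N l b = none ↔ ¬(b ⟨l-1, by omega⟩ = false ∧ b ⟨l, by omega⟩ = true) := by
  rw [fD_eq_lt l h1 h2]
  split <;> simp_all

lemma fD_N_none_iff (hN : 2 ≤ N) (b : Seq N) :
    fD N N b = none ↔ ¬(b ⟨N-2, by omega⟩ = false ∧ b ⟨N-1, by omega⟩ = false) := by
  rw [fD_eq_N hN]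
  split <;> simp_all

lemma false_chain (b : Seq N)
    (hmono : ∀ i : ℕ, (h : i + 1 < N) → b ⟨i, by omega⟩ = false → b ⟨i+1, h⟩ = false) :
    ∀ d i : ℕ, (h : i + d < N) → b ⟨i, by omega⟩ = false → b ⟨i + d, h⟩ = false := by
  intro d
  induction d with
  | zero => intro i h hb; exact hb
  | succ n ih =>
      intro i h hb
      exact hmono (i+n) (by omega) (ih i (by omega) hb)

lemma false_le (b : Seq N)
    (hmono : ∀ i : ℕ, (h : i + 1 < N) → b ⟨i, by omega⟩ = false → b ⟨i+1, h⟩ = false)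
    (i j : ℕ) (hij : i ≤ j) (hj : j < N) (hb : b ⟨i, by omega⟩ = false) :
    b ⟨j, hj⟩ = false := by
  obtain ⟨d, rfl⟩ : ∃ d, j = i + d := ⟨j - i, by omega⟩
  exact false_chain b hmono d i hj hb

lemma minusCount_le (b : Seq N) : minusCount N b ≤ N := by
  have := Finset.card_filter_le (Finset.univ : Finset (Fin N)) (fun i => b i = false)
  simpa [minusCount] using this

lemma eq_lowSeq (b : Seq N)
    (hmono : ∀ i : ℕ, (h : i + 1 < N) → b ⟨i, by omega⟩ = false → b ⟨i+1, h⟩ = false) :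
    b = lowSeq N (N - minusCount N b) := by
  funext i
  set S := Finset.univ.filter (fun j => b j = false) with hS
  have hcard : minusCount N b = S.card := rfl
  by_cases hb : b i = false
  · have hsub : Finset.Ici i ⊆ S := by
      intro j hj
      simp only [Finset.mem_Ici] at hj
      simp only [hS, Finset.mem_filter, Finset.mem_univ, true_and]
      have : b ⟨(j : ℕ), j.2⟩ = false :=
        false_le b hmono i j (Fin.le_def.mp hj) j.2 (by simpa using hb)
      simpa using this
    have hc := Finset.card_le_card hsub
    rw [Fin.card_Ici] at hc
    simp [lowSeq, hb, hcard]
    omega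
  · have hsub : S ⊆ Finset.Ioi i := by
      intro j hj
      simp only [hS, Finset.mem_filter, Finset.mem_univ, true_and] at hj
      simp only [Finset.mem_Ioi]
      by_contra hle
      push_neg at hle
      exact hb (by simpa using false_le b hmono j i (Fin.le_def.mp hle) i.2 (by simpa using hj))
    have hc := Finset.card_le_card hsub
    rw [Fin.card_Ioi] at hc
    have hiN := i.2
    simp only [Bool.not_eq_false] at hb
    simp [lowSeq, hb, hcard]
    omega

lemma hZero_mk (h0N : 1 ≤ N) (b : Seq N) (k : ℕ) :
    hZero N ((b, k) : MSeq N) = if b ⟨0, h0N⟩ = true then k else k + 1 := by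
  rw [hZero, dif_pos h0N]

lemma fSD_zero_none_iff (h0N : 1 ≤ N) (c : Seq N) (m : ℕ) :
    fSD N 0 ((c, m) : MSeq N) = none ↔ ¬(c ⟨0, h0N⟩ = true ∧ 1 ≤ m) := by
  rw [fSD, if_pos rfl, dif_pos h0N]
  split <;> simp_all

end Aux

/-- For `N ≥ 2` even, the lowest weight elements of `M_N × M'_N` (the
model of `B(−ω_N) ⊗ B(−ω_{N−1})` for `U_q(D(N,1))`), i.e. the elements killed by all
tensor-product operators `f̃_i`, `0 ≤ i ≤ N`, are exactly
`((+,…,+),0) ⊗ ((+^{2j+1},−^{N−2j−1}),0)` for `0 ≤ j ≤ (N−2)/2`, and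
`((+,…,+),0) ⊗ ((−,…,−),2k+1)` for `k ∈ ℤ_{≥0}`. -/
theorem lowest_weight_MD_tensor_MD' (N : ℕ) (hN : 2 ≤ N) (hEven : Even N)
    (x y : MSeq N) (hx : memMD N x) (hy : memMD' N y) :
    (∀ i, i ≤ N → tfSD N i (x, y) = none) ↔
      (x = (top N, 0) ∧
        ((∃ j, 2 * j ≤ N - 2 ∧ y = (lowSeq N (2 * j + 1), 0)) ∨
          (∃ k, y = (bot N, 2 * k + 1)))) := by
  obtain ⟨b, k⟩ := x
  obtain ⟨c, m⟩ := y
  have h0N : 1 ≤ N := by omega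
  constructor
  · intro h
    have hA : ∀ l, 1 ≤ l → l ≤ N → fD N l b = none := fun l h1 h2 =>
      ((tfSD_pos_none_iff hN l h1 h2 (b, k) (c, m)).mp (h l h2)).1
    have hB : ∀ l, 1 ≤ l → l ≤ N → eD N l b = none → fD N l c = none := by
      intro l h1 h2 he
      rcases ((tfSD_pos_none_iff hN l h1 h2 (b, k) (c, m)).mp (h l h2)).2 with hc | hne
      · exact hc
      · exact absurd he hne
    -- b has upward-closed falses below the top pair
    have hbmono : ∀ i : ℕ, (hi : i + 1 < N) → b ⟨i, by omega⟩ = false → b ⟨i+1, hi⟩ = false := by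
      intro i hi hb
      have h' := (fD_lt_none_iff (i+1) (by omega) (by omega) b).mp (hA (i+1) (by omega) (by omega))
      simp only [show i + 1 - 1 = i from rfl] at h'
      rcases Bool.eq_false_or_eq_true (b ⟨i+1, hi⟩) with h'' | h''
      · exact absurd ⟨hb, h''⟩ h'
      · exact h''
    have hPN := (fD_N_none_iff hN b).mp (hA N (by omega) le_rfl)
    have hbtrue : ∀ i : ℕ, (hi : i < N - 1) → b ⟨i, by omega⟩ = true := by
      intro i hi
      rcases Bool.eq_false_or_eq_true (b ⟨i, by omega⟩) with h'' | h''
      · exact h''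
      · exact absurd ⟨false_le b hbmono i (N-2) (by omega) (by omega) h'',
          false_le b hbmono i (N-1) (by omega) (by omega) h''⟩ hPN
    -- the 0-labelled condition
    have h0 := h 0 (by omega)
    rw [tfSD, if_pos rfl] at h0
    replace h0 : (if hZero N ((b, k) : MSeq N) = 0
        then (fSD N 0 ((c, m) : MSeq N)).map fun y => (((b, k) : MSeq N), y)
        else (fSD N 0 ((b, k) : MSeq N)).map fun x => (x, ((c, m) : MSeq N))) = none := h0
    have hhz : hZero N ((b, k) : MSeq N) = 0 := by
      by_contra hcon
      rw [if_neg hcon, Option.map_eq_none_iff, fSD_zero_none_iff h0N] at h0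
      rw [hZero_mk h0N] at hcon
      rcases Bool.eq_false_or_eq_true (b ⟨0, h0N⟩) with h'' | h''
      · rw [if_pos h''] at hcon
        exact h0 ⟨h'', by omega⟩
      · have h3 : b ⟨0, h0N⟩ = true := hbtrue 0 (by omega)
        simp [h''] at h3
    rw [if_pos hhz, Option.map_eq_none_iff] at h0
    have hb0k : b ⟨0, h0N⟩ = true ∧ k = 0 := by
      rw [hZero_mk h0N] at hhz
      rcases Bool.eq_false_or_eq_true (b ⟨0, h0N⟩) with h'' | h''
      · rw [if_pos h''] at hhz
        exact ⟨h'', hhz⟩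
      · rw [if_neg (by simp [h''])] at hhz
        omega
    obtain ⟨hb0, rfl⟩ := hb0k
    -- b = top
    have hxEven : Even (minusCount N b) := by
      rw [memMD] at hx
      simpa [BspPlus] using hx
    have hsub : Finset.univ.filter (fun j => b j = false) ⊆ {(⟨N-1, by omega⟩ : Fin N)} := by
      intro j hj
      simp only [Finset.mem_filter, Finset.mem_univ, true_and] at hj
      simp only [Finset.mem_singleton]
      have hj2 := j.2
      by_contra hne
      have hjlt : (j : ℕ) < N - 1 := by
        rcases Nat.lt_or_ge (j : ℕ) (N-1) with h' | h'
        · exact h'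
        · exact absurd (Fin.ext (show (j : ℕ) = N - 1 by omega)) hne
      have := hbtrue (j : ℕ) hjlt
      rw [Fin.eta] at this
      simp_all
    have hcount : minusCount N b = 0 := by
      have h1 : minusCount N b ≤ 1 := by
        simpa [minusCount] using Finset.card_le_card hsub
      rcases hxEven with ⟨r, hr⟩
      omega
    have hbtop : b = top N := by
      funext j
      have he : Finset.univ.filter (fun j => b j = false) = ∅ :=
        Finset.card_eq_zero.mp hcount
      have hj : j ∉ Finset.univ.filter (fun j => b j = false) := by rw [he]; simp
      simp only [Finset.mem_filter, Finset.mem_univ, true_and] at hj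
      simpa [top] using hj
    subst hbtop
    refine ⟨rfl, ?_⟩
    -- now constraints on c
    have hcmono : ∀ i : ℕ, (hi : i + 1 < N) → c ⟨i, by omega⟩ = false → c ⟨i+1, hi⟩ = false := by
      intro i hi hc
      have he : eD N (i+1) (top N) = none := by
        rw [eD_eq_lt (i+1) (by omega) (by omega), if_neg]
        simp [top]
      have h' := (fD_lt_none_iff (i+1) (by omega) (by omega) c).mp
        (hB (i+1) (by omega) (by omega) he)
      simp only [show i + 1 - 1 = i from rfl] at h'
      rcases Bool.eq_false_or_eq_true (c ⟨i+1, hi⟩) with h'' | h''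
      · exact absurd ⟨hc, h''⟩ h'
      · exact h''
    have hclow := eq_lowSeq c hcmono
    have hμ : minusCount N c ≤ N := minusCount_le c
    have hy0 : c ⟨0, h0N⟩ = false ∨ m = 0 := by
      rw [fSD_zero_none_iff h0N] at h0
      rcases Bool.eq_false_or_eq_true (c ⟨0, h0N⟩) with h'' | h''
      · right
        by_contra hm
        exact h0 ⟨h'', by omega⟩
      · left
        exact h''
    rcases Nat.eq_zero_or_pos m with rfl | hm
    · -- first family
      left
      have hodd : Odd (minusCount N c) := by
        rw [memMD'] at hy
        simpa [BspMinus] using hy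
      obtain ⟨n, hn⟩ := hEven
      obtain ⟨r, hr⟩ := hodd
      refine ⟨n - r - 1, by omega, ?_⟩
      rw [hclow]
      have hq : N - minusCount N c = 2 * (n - r - 1) + 1 := by omega
      rw [hq]
    · -- second family
      right
      have hc0 : c ⟨0, h0N⟩ = false := by
        rcases hy0 with h' | h'
        · exact h'
        · omega
      have ha : N - minusCount N c = 0 := by
        by_contra hcon
        have h1 : lowSeq N (N - minusCount N c) ⟨0, h0N⟩ = true := by
          simp only [lowSeq]
          simp
          omega
        rw [← hclow] at h1
        simp [h1] at hc0
      have hcbot : c = bot N := by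
        rw [hclow, ha]
        funext j
        simp [lowSeq, bot]
      have hcN : minusCount N c = N := by omega
      have hmodd : m % 2 = 1 := by
        rcases Nat.mod_two_eq_zero_or_one m with h' | h'
        · exfalso
          rw [memMD', if_pos h'] at hy
          rw [BspMinus, hcN] at hy
          rw [Nat.even_iff] at hEven
          rw [Nat.odd_iff] at hy
          omega
        · exact h'
      refine ⟨m / 2, ?_⟩
      rw [hcbot]
      congr 1
      omega
  · rintro ⟨hxeq, hy'⟩
    obtain ⟨rfl, rfl⟩ : b = top N ∧ k = 0 := by
      simpa [Prod.ext_iff] using hxeq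
    intro i hi
    rcases Nat.eq_zero_or_pos i with rfl | hi1
    · rw [tfSD, if_pos rfl]
      replace hy' : fSD N 0 ((c, m) : MSeq N) = none := by
        rw [fSD_zero_none_iff h0N]
        rcases hy' with ⟨j, hj, hc⟩ | ⟨kk, hc⟩
        · obtain ⟨rfl, rfl⟩ : c = lowSeq N (2*j+1) ∧ m = 0 := by
            simpa [Prod.ext_iff] using hc
          simp
        · obtain ⟨rfl, rfl⟩ : c = bot N ∧ m = 2 * kk + 1 := by
            simpa [Prod.ext_iff] using hc
          simp [bot]
      have hz : hZero N ((top N, 0) : MSeq N) = 0 := by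
        rw [hZero_mk h0N]
        simp [top]
      rw [if_pos hz]
      rw [Option.map_eq_none_iff]
      exact hy'
    · rw [tfSD_pos_none_iff hN i hi1 hi]
      constructor
      · rcases Nat.lt_or_ge i N with hiN | hiN
        · rw [fD_lt_none_iff i hi1 (by omega)]
          simp [top]
        · obtain rfl : i = N := by omega
          rw [fD_N_none_iff hN]
          simp [top]
      · rcases Nat.lt_or_ge i N with hiN | hiN
        · left
          rw [fD_lt_none_iff i hi1 (by omega)]
          rcases hy' with ⟨j, hj, hc⟩ | ⟨kk, hc⟩
          · obtain ⟨rfl, rfl⟩ : c = lowSeq N (2*j+1) ∧ m = 0 := by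
              simpa [Prod.ext_iff] using hc
            simp only [lowSeq]
            rintro ⟨h1, h2⟩
            simp at h1 h2
            omega
          · obtain ⟨rfl, rfl⟩ : c = bot N ∧ m = 2 * kk + 1 := by
              simpa [Prod.ext_iff] using hc
            simp [bot]
        · right
          obtain rfl : i = N := by omega
          rw [eD_eq_N hN, if_pos (by simp [top])]
          simp

end CrystalPaper
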